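/- Suppose h is a generalised h-vector. Then for every convex polytope Δ: h(CΔ) = g(Δ) + x·h(Δ), where C is the cone operator. -/
import Mathlib

open MvPolynomial

noncomputable section

abbrev R2 : Type := MvPolynomial (Fin 2) ℚ

def px : R2 := X 0
def py : R2 := X 1

/-- for a generalised h-vector
`h(Δ) = Σ_{δ ⊆ Δ} (x-y)^(dim δ) g(L_δ)` one has `h(CΔ) = g(Δ) + x·h(Δ)`.
Faces of the cone `CΔ` are: the apex (dimension 0, link `Δ`), the faces `δ`
of `Δ` (same dimension, link `C L_δ`), and the cones `Cδ` (dimension one more,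
link `L_δ`); here `f Δ` is the flag vector of `Δ`. -/
theorem stmt2 {V P : Type} [AddCommGroup V] [Module ℚ V]
    (Cop : V →ₗ[ℚ] V) (fempty : V) (f : P → V)
    (F : P → Type) [∀ Δ, Fintype (F Δ)]
    (fdim : (Δ : P) → F Δ → ℕ) (link : (Δ : P) → F Δ → V)
    (g : V →ₗ[ℚ] R2)
    (hg0 : g fempty = 1) (hgC : ∀ v : V, g (Cop v) = py * g v)
    (cone : P → P)
    (e : (Δ : P) → F (cone Δ) ≃ (Unit ⊕ F Δ ⊕ F Δ))
    (hdim : ∀ (Δ : P) (δ : F (cone Δ)),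
      fdim (cone Δ) δ = Sum.elim (fun _ => 0)
        (Sum.elim (fun δ₁ => fdim Δ δ₁) (fun δ₁ => fdim Δ δ₁ + 1)) (e Δ δ))
    (hlink : ∀ (Δ : P) (δ : F (cone Δ)),
      link (cone Δ) δ = Sum.elim (fun _ => f Δ)
        (Sum.elim (fun δ₁ => Cop (link Δ δ₁)) (fun δ₁ => link Δ δ₁)) (e Δ δ)) :
    ∀ Δ : P,
      (∑ δ : F (cone Δ), (px - py) ^ fdim (cone Δ) δ * g (link (cone Δ) δ))
        = g (f Δ) + px * ∑ δ : F Δ, (px - py) ^ fdim Δ δ * g (link Δ δ) := by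
  intro Δ
  rw [← Equiv.sum_comp (e Δ).symm
    (fun δ => (px - py) ^ fdim (cone Δ) δ * g (link (cone Δ) δ))]
  simp only [hdim, hlink, Equiv.apply_symm_apply, Fintype.sum_sum_type,
    Sum.elim_inl, Sum.elim_inr, hgC, Finset.sum_const, Finset.card_univ,
    Fintype.card_unit, one_smul, pow_zero, one_mul, pow_succ]
  rw [Finset.mul_sum]
  rw [← Finset.sum_add_distrib]
  congr 1
  apply Finset.sum_congr rfl
  intro δ _
  ring
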